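/- arXiv:2407.05987 — 2 statements merged into one kernel-verified Lean document; each statement's English description precedes it below -/
import Mathlib

section
/- Let f : [a,b] → ℝ be monotone decreasing and g : [a,b] → ℝ be absolutely continuous (in Lean: g differentiable with integrable derivative satisfying the fundamental theorem of calculus). Suppose F : ℝ → ℝ is Lipschitz, f(a) ≤ g(a), f'(t) ≤ F(f(t)) for almost every t ∈ (a,b) (where f' denotes the a.e.-defined derivative of the monotone function f), and g'(t) = F(g(t)) for almost every t ∈ (a,b). Then f(t) ≤ g(t) for every t ∈ [a,b]. -/
open MeasureTheory Set

open Filter in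
lemma antitone_key (a b : ℝ) (hab : a ≤ b) (f f' : ℝ → ℝ)
    (hf : AntitoneOn f (Icc a b))
    (hf' : ∀ᵐ t ∂volume, t ∈ Ioo a b → HasDerivAt f (f' t) t) :
    IntegrableOn f' (Ioo a b) ∧
      ∀ t s, a ≤ t → t ≤ s → s ≤ b → f s - f t ≤ ∫ ρ in Ioo t s, f' ρ := by
  classical
  set m : ℝ → ℝ := fun x => -f (max a (min b x)) with hm_def
  have hm : Monotone m := by
    intro x y hxy
    have h1 : max a (min b x) ∈ Icc a b := ⟨le_max_left _ _, max_le hab (min_le_left _ _)⟩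
    have h2 : max a (min b y) ∈ Icc a b := ⟨le_max_left _ _, max_le hab (min_le_left _ _)⟩
    have : max a (min b x) ≤ max a (min b y) :=
      max_le_max le_rfl (min_le_min le_rfl hxy)
    simpa [hm_def] using neg_le_neg (hf h1 h2 this)
  have hmeq : ∀ x ∈ Icc a b, m x = -f x := by
    intro x hx
    simp only [hm_def]
    rw [min_eq_right hx.2, max_eq_right hx.1]
  set μ := hm.stieltjesFunction.measure with hμ_def
  set d : ℝ → ℝ := fun x => (μ.rnDeriv volume x).toReal with hd_def
  -- a.e. on Ioo a b, f' = -d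
  have hda : ∀ᵐ x ∂volume, x ∈ Ioo a b → f' x = -(d x) := by
    filter_upwards [hf', hm.ae_hasDerivAt] with x hx hdm hxmem
    have h1 : HasDerivAt m (d x) x := hdm
    -- m = -f near x
    have hev : (fun y => -f y) =ᶠ[nhds x] m := by
      filter_upwards [Ioo_mem_nhds hxmem.1 hxmem.2] with y hy
      rw [hmeq y (Ioo_subset_Icc_self hy)]
    have h2 : HasDerivAt m (-(f' x)) x := by
      have := (hx hxmem).neg
      exact this.congr_of_eventuallyEq hev.symm
    have := h1.unique h2
    linarith
  have hμIoo : ∀ t s : ℝ, μ (Ioo t s) ≠ ⊤ := by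
    intro t s
    rw [hμ_def, StieltjesFunction.measure_Ioo]
    exact ENNReal.ofReal_ne_top
  have hdint : ∀ t s : ℝ, IntegrableOn d (Ioo t s) volume := by
    intro t s
    exact Measure.integrableOn_toReal_rnDeriv (hμIoo t s)
  have hf'int : IntegrableOn f' (Ioo a b) volume := by
    refine (hdint a b).neg.congr ?_
    refine (ae_restrict_iff' measurableSet_Ioo).2 ?_
    filter_upwards [hda] with x hx hxmem
    exact (hx hxmem).symm
  refine ⟨hf'int, fun t s hat hts hsb => ?_⟩
  rcases eq_or_lt_of_le hts with rfl | hts'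
  · simp
  have hIoosub : Ioo t s ⊆ Ioo a b := Ioo_subset_Ioo hat hsb
  have h1 : ∫ ρ in Ioo t s, f' ρ = ∫ ρ in Ioo t s, -(d ρ) := by
    refine setIntegral_congr_ae measurableSet_Ioo ?_
    filter_upwards [hda] with x hx hxmem
    exact hx (hIoosub hxmem)
  have h2 : ∫ ρ in Ioo t s, d ρ ≤ (μ (Ioo t s)).toReal :=
    Measure.setIntegral_toReal_rnDeriv_le (hμIoo t s)
  -- bound the measure
  set G := hm.stieltjesFunction with hG_def
  have hμval : μ (Ioo t s) = ENNReal.ofReal (Function.leftLim (↑G) s - G t) := by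
    rw [hμ_def, StieltjesFunction.measure_Ioo]
  have hGle : Function.leftLim (↑G) s ≤ m s := by
    refine le_of_tendsto (G.mono.tendsto_leftLim s) ?_
    filter_upwards [self_mem_nhdsWithin] with y (hy : y < s)
    calc (G : ℝ → ℝ) y = Function.rightLim m y := hm.stieltjesFunction_eq y
      _ ≤ m s := hm.rightLim_le hy
  have hmleG : m t ≤ G t := by
    rw [hm.stieltjesFunction_eq t]
    exact hm.le_rightLim le_rfl
  have hμle : (μ (Ioo t s)).toReal ≤ m s - m t := by
    rw [hμval]
    rw [ENNReal.toReal_ofReal']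
    have : Function.leftLim (↑G) s - G t ≤ m s - m t := by
      have := hGle; have := hmleG; linarith
    have hmm : (0:ℝ) ≤ m s - m t := by
      have := hm hts; linarith
    exact max_le this hmm
  have hfin : m s - m t = f t - f s := by
    rw [hmeq t ⟨hat, le_trans hts hsb⟩, hmeq s ⟨le_trans hat hts, hsb⟩]
    ring
  have : ∫ ρ in Ioo t s, -(d ρ) = -∫ ρ in Ioo t s, d ρ := integral_neg _
  linarith [h2, hμle]

open Filter in
/-- Comparison lemma: a monotone decreasing function satisfying a differential
inequality a.e. stays below the solution of the corresponding ODE. -/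
theorem stmt_0 (a b : ℝ) (hab : a ≤ b) (f g f' g' F : ℝ → ℝ) (K : NNReal)
    (hf : AntitoneOn f (Icc a b))
    (hf' : ∀ᵐ t ∂volume, t ∈ Ioo a b → HasDerivAt f (f' t) t)
    (hg : ∀ t ∈ Icc a b, HasDerivAt g (g' t) t)
    (hg'int : IntegrableOn g' (Icc a b))
    (hftc : ∀ t ∈ Icc a b, g t - g a = ∫ s in a..t, g' s)
    (hF : LipschitzWith K F)
    (hinit : f a ≤ g a)
    (hfineq : ∀ᵐ t ∂volume, t ∈ Ioo a b → f' t ≤ F (f t))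
    (hgeq : ∀ᵐ t ∂volume, t ∈ Ioo a b → g' t = F (g t)) :
    ∀ t ∈ Icc a b, f t ≤ g t := by
  obtain ⟨hf'int, hkey⟩ := antitone_key a b hab f f' hf hf'
  have hgc : ContinuousOn g (Icc a b) := fun t ht => (hg t ht).continuousAt.continuousWithinAt
  have hfint : IntegrableOn f (Icc a b) := AntitoneOn.integrableOn_isCompact isCompact_Icc hf
  have hgint : IntegrableOn g (Icc a b) := hgc.integrableOn_Icc
  set u : ℝ → ℝ := fun t => f t - g t with hu_def
  have huint : IntegrableOn u (Icc a b) := hfint.sub hgint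
  obtain ⟨Mg, hMg⟩ := isCompact_Icc.exists_bound_of_continuousOn hgc
  have hMg0 : 0 ≤ Mg := le_trans (norm_nonneg _) (hMg a (left_mem_Icc.2 hab))
  set M : ℝ := |f a| + |f b| + Mg with hM_def
  have hMbound : ∀ t ∈ Icc a b, u t ≤ M := by
    intro t ht
    have h1 : f t ≤ f a := hf (left_mem_Icc.2 hab) ht ht.1
    have h2 : ‖g t‖ ≤ Mg := hMg t ht
    rw [Real.norm_eq_abs] at h2
    have h3 : -g t ≤ |g t| := neg_le_abs _
    have h4 : f a ≤ |f a| := le_abs_self _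
    have h5 : (0:ℝ) ≤ |f b| := abs_nonneg _
    simp only [hu_def, hM_def]; linarith
  -- FTC for g on subintervals
  have hgftc : ∀ c t, a ≤ c → c ≤ t → t ≤ b → g t - g c = ∫ ρ in Ioo c t, g' ρ := by
    intro c t hac hct htb
    have hIac : IntervalIntegrable g' volume a c := by
      rw [intervalIntegrable_iff_integrableOn_Icc_of_le hac]
      exact hg'int.mono_set (Icc_subset_Icc le_rfl (hct.trans htb))
    have hIct : IntervalIntegrable g' volume c t := by
      rw [intervalIntegrable_iff_integrableOn_Icc_of_le hct]
      exact hg'int.mono_set (Icc_subset_Icc hac htb)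
    have h1 := hftc t ⟨hac.trans hct, htb⟩
    have h2 := hftc c ⟨hac, hct.trans htb⟩
    have h3 : (∫ s in a..t, g' s) = (∫ s in a..c, g' s) + ∫ s in c..t, g' s :=
      (intervalIntegral.integral_add_adjacent_intervals hIac hIct).symm
    rw [intervalIntegral.integral_of_le hct, integral_Ioc_eq_integral_Ioo] at h3
    linarith
  -- main contradiction argument
  by_contra hcon
  push_neg at hcon
  obtain ⟨t₀, ht₀mem, ht₀⟩ := hcon
  have hut₀ : 0 < u t₀ := by simp only [hu_def]; linarith
  have hat₀ : a ≤ t₀ := ht₀mem.1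
  have ht₀b : t₀ ≤ b := ht₀mem.2
  set S : Set ℝ := {t | t ∈ Icc a t₀ ∧ u t ≤ 0} with hS_def
  have haS : a ∈ S := ⟨left_mem_Icc.2 hat₀, by simp only [hu_def]; linarith⟩
  have hSne : S.Nonempty := ⟨a, haS⟩
  have hSbdd : BddAbove S := ⟨t₀, fun x hx => hx.1.2⟩
  set c := sSup S with hc_def
  have hac : a ≤ c := le_csSup hSbdd haS
  have hct₀ : c ≤ t₀ := csSup_le hSne fun x hx => hx.1.2
  have hcb : c ≤ b := hct₀.trans ht₀b
  have hcmem : c ∈ Icc a b := ⟨hac, hcb⟩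
  have hucle : u c ≤ 0 := by
    by_contra huc
    push_neg at huc
    have hgcc := hgc c hcmem
    rw [Metric.continuousWithinAt_iff] at hgcc
    obtain ⟨ε, hε, hδ⟩ := hgcc (u c) huc
    obtain ⟨s, hsS, hs⟩ := exists_lt_of_lt_csSup hSne (by linarith : c - ε < c)
    have hsc : s ≤ c := le_csSup hSbdd hsS
    have hsmem : s ∈ Icc a b := ⟨hsS.1.1, hsS.1.2.trans ht₀b⟩
    have hdist : dist s c < ε := by
      rw [Real.dist_eq, abs_of_nonpos (by linarith)]; linarith
    have hgdist := hδ hsmem hdist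
    rw [Real.dist_eq] at hgdist
    have hgd2 : |g s - g c| < f c - g c := hgdist
    have hfcs : f c ≤ f s := hf hsmem hcmem hsc
    have hus : u s ≤ 0 := hsS.2
    have habs : g s - g c ≤ |g s - g c| := le_abs_self _
    simp only [hu_def] at hus huc
    linarith
  have hpos : ∀ ρ, c < ρ → ρ ≤ t₀ → 0 < u ρ := by
    intro ρ hcρ hρt₀
    by_contra h
    push_neg at h
    have : ρ ∈ S := ⟨⟨hac.trans hcρ.le, hρt₀⟩, h⟩
    exact absurd (le_csSup hSbdd this) (not_le.2 hcρ)
  -- key inequality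
  have hstep : ∀ t ∈ Icc c t₀, u t ≤ K * ∫ ρ in Ioo c t, u ρ := by
    intro t ht
    have hct : c ≤ t := ht.1
    have htb' : t ≤ b := ht.2.trans ht₀b
    have hsub : Ioo c t ⊆ Ioo a b := Ioo_subset_Ioo hac htb'
    have hsubIcc : Ioo c t ⊆ Icc a b := hsub.trans Ioo_subset_Icc_self
    have h1 : f t - f c ≤ ∫ ρ in Ioo c t, f' ρ := hkey c t hac hct htb'
    have h2 : g t - g c = ∫ ρ in Ioo c t, g' ρ := hgftc c t hac hct htb'
    have hif : IntegrableOn f' (Ioo c t) volume := hf'int.mono_set hsub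
    have hig : IntegrableOn g' (Ioo c t) volume := hg'int.mono_set hsubIcc
    have hiu : IntegrableOn (fun ρ => (K:ℝ) * u ρ) (Ioo c t) volume :=
      (huint.mono_set hsubIcc).const_mul _
    have h3 : (∫ ρ in Ioo c t, f' ρ) - ∫ ρ in Ioo c t, g' ρ
        = ∫ ρ in Ioo c t, (f' ρ - g' ρ) := (integral_sub hif hig).symm
    have h4 : ∫ ρ in Ioo c t, (f' ρ - g' ρ) ≤ ∫ ρ in Ioo c t, (K:ℝ) * u ρ := by
      refine setIntegral_mono_on_ae (hif.sub hig) hiu measurableSet_Ioo ?_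
      filter_upwards [hfineq, hgeq] with ρ hρ1 hρ2 hρmem
      have hρab : ρ ∈ Ioo a b := hsub hρmem
      have e1 := hρ1 hρab
      have e2 := hρ2 hρab
      have lip : F (f ρ) - F (g ρ) ≤ (K:ℝ) * |f ρ - g ρ| := by
        have hd := hF.dist_le_mul (f ρ) (g ρ)
        rw [Real.dist_eq, Real.dist_eq] at hd
        exact (le_abs_self _).trans hd
      have hupos : 0 < u ρ := hpos ρ hρmem.1 (hρmem.2.le.trans ht.2)
      simp only [hu_def] at hupos ⊢
      rw [abs_of_pos hupos] at lip
      linarith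
    have h5 : ∫ ρ in Ioo c t, (K:ℝ) * u ρ = (K:ℝ) * ∫ ρ in Ioo c t, u ρ :=
      integral_const_mul _ _
    simp only [hu_def] at hucle ⊢
    linarith
  -- iterate
  have hiter : ∀ n : ℕ, ∀ t ∈ Icc c t₀, u t ≤ M * (K:ℝ)^n * (t - c)^n / n.factorial := by
    intro n
    induction n with
    | zero =>
      intro t ht
      simpa using hMbound t ⟨hac.trans ht.1, ht.2.trans ht₀b⟩
    | succ n ih =>
      intro t ht
      have hct : c ≤ t := ht.1
      have hsubIcc : Ioo c t ⊆ Icc a b :=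
        (Ioo_subset_Ioo hac (ht.2.trans ht₀b)).trans Ioo_subset_Icc_self
      have hpoly : IntegrableOn (fun ρ => M * (K:ℝ)^n * (ρ - c)^n / n.factorial) (Ioo c t) volume := by
        exact ((((continuous_const.mul ((continuous_id.sub continuous_const).pow n)).div_const
          _)).integrableOn_Icc).mono_set Ioo_subset_Icc_self
      have h6 : ∫ ρ in Ioo c t, u ρ ≤ ∫ ρ in Ioo c t, M * (K:ℝ)^n * (ρ - c)^n / n.factorial :=
        setIntegral_mono_on (huint.mono_set hsubIcc) hpoly measurableSet_Ioo
          (fun ρ hρ => ih ρ ⟨hρ.1.le, hρ.2.le.trans ht.2⟩)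
      have h7 : ∫ ρ in Ioo c t, (ρ - c)^n = (t - c)^(n+1)/(n+1) := by
        rw [← integral_Ioc_eq_integral_Ioo, ← intervalIntegral.integral_of_le hct]
        rw [intervalIntegral.integral_comp_sub_right (fun x => x ^ n) c]
        simp [integral_pow]
      have h8 : ∫ ρ in Ioo c t, M * (K:ℝ)^n * (ρ - c)^n / n.factorial
          = M * (K:ℝ)^n / n.factorial * ((t - c)^(n+1)/(n+1)) := by
        rw [← h7, ← integral_const_mul]
        congr 1; ext ρ; ring
      have h9 := hstep t ht
      have h10 : (K:ℝ) * ∫ ρ in Ioo c t, u ρ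
          ≤ (K:ℝ) * (M * (K:ℝ)^n / n.factorial * ((t - c)^(n+1)/(n+1))) := by
        rw [← h8]
        exact mul_le_mul_of_nonneg_left h6 K.2
      have hfact : ((n+1).factorial : ℝ) = (n+1) * n.factorial := by
        rw [Nat.factorial_succ]; push_cast; ring
      have hne1 : (n.factorial : ℝ) ≠ 0 := Nat.cast_ne_zero.2 n.factorial_ne_zero
      have hne2 : ((n:ℝ)+1) ≠ 0 := by positivity
      calc u t ≤ (K:ℝ) * ∫ ρ in Ioo c t, u ρ := h9
        _ ≤ (K:ℝ) * (M * (K:ℝ)^n / n.factorial * ((t - c)^(n+1)/(n+1))) := h10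
        _ = M * (K:ℝ)^(n+1) * (t - c)^(n+1) / (n+1).factorial := by
            rw [hfact]; field_simp; ring
  -- conclude
  have hfin : ∀ n : ℕ, u t₀ ≤ M * (((K:ℝ) * (t₀ - c))^n / n.factorial) := by
    intro n
    have := hiter n t₀ ⟨hct₀, le_refl _⟩
    calc u t₀ ≤ M * (K:ℝ)^n * (t₀ - c)^n / n.factorial := this
      _ = M * (((K:ℝ) * (t₀ - c))^n / n.factorial) := by rw [mul_pow]; ring
  have hlim : Tendsto (fun n : ℕ => M * (((K:ℝ) * (t₀ - c))^n / n.factorial)) atTop (nhds 0) := by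
    have := FloorSemiring.tendsto_pow_div_factorial_atTop ((K:ℝ) * (t₀ - c))
    simpa using this.const_mul M
  have : u t₀ ≤ 0 := ge_of_tendsto' hlim hfin
  linarith
end

section
/- Let C ⊆ 𝕊ⁿ (the unit sphere in ℝ^{n+1}) be a closed set that is strongly convex: for every p, q ∈ C there is a unique minimal geodesic in 𝕊ⁿ joining p and q, and this geodesic is contained in C. Then C is contained in an open hemisphere, i.e. there exists a unit vector v ∈ ℝ^{n+1} such that ⟨v, x⟩ > 0 for all x ∈ C. -/
open Set
open scoped RealInnerProductSpace

/-- The unit sphere `𝕊ⁿ ⊂ ℝ^{n+1}`. -/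
abbrev Sph (n : ℕ) := Metric.sphere (0 : EuclideanSpace ℝ (Fin (n + 1))) 1

/-- The geodesic (intrinsic) distance on the sphere. -/
noncomputable def gdist {n : ℕ} (x y : Sph n) : ℝ :=
  Real.arccos ⟪(x : EuclideanSpace ℝ (Fin (n + 1))), (y : EuclideanSpace ℝ (Fin (n + 1)))⟫

/-- `γ`, parametrized proportionally to arc length on `[0,1]`, is a minimal
geodesic of the sphere joining `p` and `q`. -/
def IsMinGeodesic {n : ℕ} (p q : Sph n) (γ : ℝ → Sph n) : Prop :=
  γ 0 = p ∧ γ 1 = q ∧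
    ∀ s ∈ Icc (0 : ℝ) 1, ∀ t ∈ Icc (0 : ℝ) 1,
      gdist (γ s) (γ t) = |s - t| * gdist p q

/-- A set `C ⊆ 𝕊ⁿ` is strongly convex: any two of its points are joined by a
minimal geodesic of `𝕊ⁿ`, this geodesic is unique, and it is contained in `C`. -/
def StronglyConvex {n : ℕ} (C : Set (Sph n)) : Prop :=
  ∀ p ∈ C, ∀ q ∈ C,
    (∃ γ : ℝ → Sph n, IsMinGeodesic p q γ) ∧
    (∀ γ γ' : ℝ → Sph n, IsMinGeodesic p q γ → IsMinGeodesic p q γ' →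
      EqOn γ γ' (Icc 0 1)) ∧
    (∀ γ : ℝ → Sph n, IsMinGeodesic p q γ → γ '' Icc 0 1 ⊆ C)

namespace Stmt4Aux

abbrev Euc (n : ℕ) := EuclideanSpace ℝ (Fin (n + 1))

variable {n : ℕ}

lemma norm_one (x : Sph n) : ‖(x : Euc n)‖ = 1 := mem_sphere_zero_iff_norm.mp x.2

lemma coe_ne_zero (x : Sph n) : (x : Euc n) ≠ 0 := by
  intro h
  have := norm_one x
  rw [h] at this
  norm_num at this

lemma norm_combo {p w : Euc n} (hp : ‖p‖ = 1) (hw : ‖w‖ = 1) (hpw : ⟪p, w⟫ = 0) (x : ℝ) :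
    ‖Real.cos x • p + Real.sin x • w‖ = 1 := by
  have h : ‖Real.cos x • p + Real.sin x • w‖ ^ 2 = 1 := by
    rw [norm_add_sq_real, norm_smul, norm_smul, real_inner_smul_left, real_inner_smul_right,
      hpw, hp, hw]
    have := Real.sin_sq_add_cos_sq x
    simp only [Real.norm_eq_abs, mul_one, mul_zero]
    nlinarith [sq_abs (Real.cos x), sq_abs (Real.sin x)]
  nlinarith [norm_nonneg (Real.cos x • p + Real.sin x • w)]

lemma inner_combo {p w : Euc n} (hp : ‖p‖ = 1) (hw : ‖w‖ = 1) (hpw : ⟪p, w⟫ = 0) (s t : ℝ) :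
    ⟪Real.cos s • p + Real.sin s • w, Real.cos t • p + Real.sin t • w⟫ = Real.cos (s - t) := by
  rw [inner_add_left, inner_add_right, inner_add_right, real_inner_smul_left,
    real_inner_smul_left, real_inner_smul_left, real_inner_smul_left, real_inner_smul_right,
    real_inner_smul_right, real_inner_smul_right, real_inner_smul_right,
    real_inner_self_eq_norm_sq, real_inner_self_eq_norm_sq, hpw,
    show ⟪w, p⟫ = (0:ℝ) by rw [real_inner_comm]; exact hpw,
    hp, hw, Real.cos_sub]
  ring

lemma isMinGeodesic_combo {p q : Sph n} {w : Euc n} (hw : ‖w‖ = 1)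
    (hpw : ⟪(p : Euc n), w⟫ = 0) {θ : ℝ} (hθ0 : 0 ≤ θ) (hθπ : θ ≤ Real.pi)
    (hq : (q : Euc n) = Real.cos θ • (p : Euc n) + Real.sin θ • w) :
    IsMinGeodesic p q (fun t => ⟨Real.cos (t * θ) • (p : Euc n) + Real.sin (t * θ) • w,
      mem_sphere_zero_iff_norm.mpr (norm_combo (norm_one p) hw hpw _)⟩) := by
  have hpq : ⟪(p : Euc n), (q : Euc n)⟫ = Real.cos θ := by
    rw [hq, inner_add_right, real_inner_smul_right, real_inner_smul_right,
      real_inner_self_eq_norm_sq, norm_one p, hpw]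
    ring
  have hg : gdist p q = θ := by
    rw [gdist, hpq, Real.arccos_cos hθ0 hθπ]
  refine ⟨?_, ?_, ?_⟩
  · apply Subtype.ext
    simp
  · apply Subtype.ext
    simpa using hq.symm
  · intro s hs t ht
    have habs : |s - t| ≤ 1 := by
      rw [abs_sub_le_iff]
      constructor <;> [linarith [hs.1, hs.2, ht.1, ht.2]; linarith [hs.1, hs.2, ht.1, ht.2]]
    show Real.arccos ⟪_, _⟫ = _
    rw [inner_combo (norm_one p) hw hpw]
    have h1 : s * θ - t * θ = (s - t) * θ := by ring
    rw [h1, ← Real.cos_abs, abs_mul, abs_of_nonneg hθ0, hg,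
      Real.arccos_cos (by positivity) (by nlinarith [Real.pi_pos])]

end Stmt4Aux

namespace Stmt4Aux

variable {n : ℕ} {C : Set (Sph n)}

lemma no_antipodal (hconv : StronglyConvex C) {p q : Sph n} (hp : p ∈ C) (hq : q ∈ C)
    (h : (q : Euc n) = -(p : Euc n)) : False := by
  obtain ⟨⟨γ, hγ⟩, huniq, -⟩ := hconv p hp q hq
  have hpq : ⟪(p : Euc n), (q : Euc n)⟫ = -1 := by
    rw [h, inner_neg_right, real_inner_self_eq_norm_sq, norm_one p]
    norm_num
  have hg : gdist p q = Real.pi := by rw [gdist, hpq, Real.arccos_neg_one]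
  set m := γ (1/2) with hm
  have hdist : gdist p m = Real.pi / 2 := by
    have := hγ.2.2 0 ⟨le_refl _, zero_le_one⟩ (1/2) ⟨by norm_num, by norm_num⟩
    rw [hγ.1, hg] at this
    rw [this]
    rw [show |(0:ℝ) - 1/2| = 1/2 by rw [abs_sub_comm]; norm_num]
    ring
  have hbound : |⟪(p : Euc n), (m : Euc n)⟫| ≤ 1 := by
    have := abs_real_inner_le_norm (p : Euc n) (m : Euc n)
    rwa [norm_one, norm_one, mul_one] at this
  have hpm : ⟪(p : Euc n), (m : Euc n)⟫ = 0 := by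
    have h1 : Real.cos (gdist p m) = ⟪(p : Euc n), (m : Euc n)⟫ :=
      Real.cos_arccos (by linarith [abs_le.mp hbound]) (by linarith [abs_le.mp hbound])
    rw [hdist, Real.cos_pi_div_two] at h1
    exact h1.symm
  have hq' : (q : Euc n) = Real.cos Real.pi • (p : Euc n) + Real.sin Real.pi • (m : Euc n) := by
    rw [Real.cos_pi, Real.sin_pi, h]
    simp [neg_smul]
  have hq'' : (q : Euc n) = Real.cos Real.pi • (p : Euc n) + Real.sin Real.pi • (-(m : Euc n)) := by
    rw [Real.cos_pi, Real.sin_pi, h]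
    simp [neg_smul]
  have h1 := isMinGeodesic_combo (norm_one m) hpm (le_of_lt Real.pi_pos) (le_refl _) hq'
  have h2 := isMinGeodesic_combo (w := -(m : Euc n)) (by rw [norm_neg]; exact norm_one m)
    (by rw [inner_neg_right, hpm, neg_zero]) (le_of_lt Real.pi_pos) (le_refl _) hq''
  have heq := huniq _ _ h1 h2 (show (1/2 : ℝ) ∈ Icc (0:ℝ) 1 by constructor <;> norm_num)
  have heq' := congrArg (Subtype.val) heq
  simp only at heq'
  rw [show (1/2 : ℝ) * Real.pi = Real.pi / 2 by ring, Real.cos_pi_div_two,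
    Real.sin_pi_div_two, zero_smul, one_smul, zero_add, zero_add] at heq'
  have : (m : Euc n) = 0 := by
    have h2m : (2 : ℝ) • (m : Euc n) = 0 := by
      rw [two_smul]
      nth_rewrite 1 [heq']
      simp
    simpa using h2m
  exact coe_ne_zero m this

end Stmt4Aux

namespace Stmt4Aux

variable {n : ℕ} {C : Set (Sph n)}

set_option maxHeartbeats 1000000 in
lemma combo_mem (hconv : StronglyConvex C) {p q : Sph n} (hp : p ∈ C) (hq : q ∈ C)
    {a b : ℝ} (ha : 0 < a) (hb : 0 < b) :
    a • (p : Euc n) + b • (q : Euc n) ≠ 0 ∧ ∃ m : Sph n, m ∈ C ∧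
      a • (p : Euc n) + b • (q : Euc n) =
        ‖a • (p : Euc n) + b • (q : Euc n)‖ • (m : Euc n) := by
  by_cases hpq : p = q
  · subst hpq
    have hv : a • (p : Euc n) + b • (p : Euc n) = (a + b) • (p : Euc n) := by
      rw [add_smul]
    refine ⟨by rw [hv]; exact smul_ne_zero (by positivity) (coe_ne_zero p), p, hp, ?_⟩
    rw [hv, norm_smul, norm_one, Real.norm_eq_abs, abs_of_pos (by positivity), mul_one]
  · -- inner product strictly between -1 and 1
    have hb1 : |⟪(p : Euc n), (q : Euc n)⟫| ≤ 1 := by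
      have := abs_real_inner_le_norm (p : Euc n) (q : Euc n)
      rwa [norm_one, norm_one, mul_one] at this
    have hlt : ⟪(p : Euc n), (q : Euc n)⟫ < 1 := by
      rcases lt_or_eq_of_le (abs_le.mp hb1).2 with h | h
      · exact h
      · exact absurd (Subtype.ext ((inner_eq_one_iff_of_norm_eq_one (norm_one p)
          (norm_one q)).mp h)) hpq
    have hgt : -1 < ⟪(p : Euc n), (q : Euc n)⟫ := by
      rcases lt_or_eq_of_le (abs_le.mp hb1).1 with h | h
      · exact h
      · exfalso
        have hinner : ⟪(p : Euc n), -(q : Euc n)⟫ = 1 := by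
          rw [inner_neg_right, ← h]; norm_num
        have heq := (inner_eq_one_iff_of_norm_eq_one (norm_one p)
          (by rw [norm_neg]; exact norm_one q)).mp hinner
        exact no_antipodal hconv hp hq (by rw [heq]; simp)
    set θ := Real.arccos ⟪(p : Euc n), (q : Euc n)⟫ with hθ
    have hcos : Real.cos θ = ⟪(p : Euc n), (q : Euc n)⟫ :=
      Real.cos_arccos hgt.le hlt.le
    have hθ0 : 0 < θ := Real.arccos_pos.mpr hlt
    have hθπ : θ < Real.pi := by
      rcases lt_or_eq_of_le (Real.arccos_le_pi ⟪(p : Euc n), (q : Euc n)⟫) with h | h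
      · exact h
      · exact absurd (Real.arccos_eq_pi.mp h) (by linarith)
    have hsin : 0 < Real.sin θ := Real.sin_pos_of_pos_of_lt_pi hθ0 hθπ
    set w : Euc n := (Real.sin θ)⁻¹ • ((q : Euc n) - Real.cos θ • (p : Euc n)) with hwdef
    have hnormsub : ‖(q : Euc n) - Real.cos θ • (p : Euc n)‖ = Real.sin θ := by
      have hsq : ‖(q : Euc n) - Real.cos θ • (p : Euc n)‖ ^ 2 = Real.sin θ ^ 2 := by
        rw [norm_sub_sq_real, real_inner_smul_right, norm_smul, norm_one, Real.norm_eq_abs,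
          real_inner_comm, ← hcos, Real.sin_sq, norm_one p]
        nlinarith [sq_abs (Real.cos θ)]
      nlinarith [norm_nonneg ((q : Euc n) - Real.cos θ • (p : Euc n))]
    have hw : ‖w‖ = 1 := by
      rw [hwdef, norm_smul, hnormsub, Real.norm_eq_abs, abs_of_pos (by positivity),
        inv_mul_cancel₀ hsin.ne']
    have hpw : ⟪(p : Euc n), w⟫ = 0 := by
      rw [hwdef, real_inner_smul_right, inner_sub_right, real_inner_smul_right,
        real_inner_self_eq_norm_sq, norm_one, hcos]
      ring
    have hq' : (q : Euc n) = Real.cos θ • (p : Euc n) + Real.sin θ • w := by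
      rw [hwdef, smul_inv_smul₀ hsin.ne']
      abel
    have hγ := isMinGeodesic_combo hw hpw hθ0.le hθπ.le hq'
    -- find t with the right coefficient ratio
    set f : ℝ → ℝ := fun t => Real.sin ((1 - t) * θ) * b - Real.sin (t * θ) * a with hf
    have hcont : ContinuousOn f (Icc 0 1) := by fun_prop
    have hf0 : f 0 = Real.sin θ * b := by simp [hf]
    have hf1 : f 1 = -(Real.sin θ * a) := by simp [hf]
    have hmem : (0 : ℝ) ∈ Ioo (f 1) (f 0) := by
      rw [hf0, hf1]
      constructor
      · nlinarith
      · nlinarith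
    obtain ⟨t, ht, hft⟩ := intermediate_value_Ioo' zero_le_one hcont hmem
    have hsin_t : 0 < Real.sin (t * θ) :=
      Real.sin_pos_of_pos_of_lt_pi (by nlinarith [ht.1, ht.2])
        (by nlinarith [ht.1, ht.2, Real.pi_pos])
    have hrel : Real.sin ((1 - t) * θ) * b = Real.sin (t * θ) * a := by
      have h0 := hft
      simp only [hf] at h0
      linarith
    set lam : ℝ := Real.sin (t * θ) / (b * Real.sin θ) with hlam
    have hlampos : 0 < lam := by positivity
    have hsinsub : Real.sin ((1 - t) * θ) =
        Real.sin θ * Real.cos (t * θ) - Real.cos θ * Real.sin (t * θ) := by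
      rw [show (1 - t) * θ = θ - t * θ by ring, Real.sin_sub]
    have hcq : Real.sin (t * θ) * (Real.sin θ)⁻¹ = lam * b := by
      rw [hlam]
      field_simp
    have hcp : Real.cos (t * θ) - Real.sin (t * θ) * (Real.sin θ)⁻¹ * Real.cos θ = lam * a := by
      rw [hlam]
      field_simp
      linear_combination (-b) * hsinsub + hrel
    have hkey : Real.cos (t * θ) • (p : Euc n) + Real.sin (t * θ) • w =
        lam • (a • (p : Euc n) + b • (q : Euc n)) := by
      have hexp : Real.sin (t * θ) • w =
          (Real.sin (t * θ) * (Real.sin θ)⁻¹) • (q : Euc n) -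
            (Real.sin (t * θ) * (Real.sin θ)⁻¹ * Real.cos θ) • (p : Euc n) := by
        rw [hwdef, smul_smul, smul_sub, smul_smul]
      have hsplit : Real.cos (t * θ) • (p : Euc n) + Real.sin (t * θ) • w =
          (Real.cos (t * θ) - Real.sin (t * θ) * (Real.sin θ)⁻¹ * Real.cos θ) • (p : Euc n) +
            (Real.sin (t * θ) * (Real.sin θ)⁻¹) • (q : Euc n) := by
        rw [hexp, sub_smul]
        abel
      rw [hsplit, hcp, hcq, smul_add, smul_smul, smul_smul]
    set mpt : Sph n := ⟨Real.cos (t * θ) • (p : Euc n) + Real.sin (t * θ) • w,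
      mem_sphere_zero_iff_norm.mpr (norm_combo (norm_one p) hw hpw _)⟩ with hmpt
    have hmC : mpt ∈ C := by
      refine (hconv p hp q hq).2.2 _ hγ ⟨t, Ioo_subset_Icc_self ht, rfl⟩
    have hvne : a • (p : Euc n) + b • (q : Euc n) ≠ 0 := by
      intro h0
      have : (mpt : Euc n) = 0 := by
        rw [hmpt]
        simp only
        rw [hkey, h0, smul_zero]
      exact coe_ne_zero mpt this
    refine ⟨hvne, mpt, hmC, ?_⟩
    have hmv : (mpt : Euc n) = lam • (a • (p : Euc n) + b • (q : Euc n)) := hkey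
    have hnorm : ‖a • (p : Euc n) + b • (q : Euc n)‖ = lam⁻¹ := by
      have h1 : lam * ‖a • (p : Euc n) + b • (q : Euc n)‖ = 1 := by
        have hn := norm_one mpt
        rw [hmv, norm_smul, Real.norm_eq_abs, abs_of_pos hlampos] at hn
        linarith
      exact eq_inv_of_mul_eq_one_left (by rw [mul_comm]; exact h1)
    rw [hnorm, hmv, smul_smul, inv_mul_cancel₀ hlampos.ne', one_smul]

end Stmt4Aux

namespace Stmt4Aux

variable {n : ℕ} {C : Set (Sph n)}

lemma cone_ne_zero (hconv : StronglyConvex C) :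
    ∀ (k : ℕ), k ≠ 0 → ∀ (w : Fin k → ℝ) (z : Fin k → Euc n),
      (∀ i, 0 < w i) → (∀ i, z i ∈ Subtype.val '' C) → ∑ i, w i • z i ≠ 0 := by
  intro k
  induction k with
  | zero => intro h; exact absurd rfl h
  | succ k ih =>
    intro _ w z hw hz
    by_cases hk0 : k = 0
    · subst hk0
      rw [Fin.sum_univ_one]
      exact smul_ne_zero (hw 0).ne' (by
        intro h0
        have := hz 0
        rw [h0] at this
        obtain ⟨c, -, hc⟩ := this
        exact coe_ne_zero c hc)
    · obtain ⟨k', rfl⟩ := Nat.exists_eq_succ_of_ne_zero hk0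
      obtain ⟨p, hpC, hpz⟩ := hz 0
      obtain ⟨q, hqC, hqz⟩ := hz 1
      obtain ⟨hvne, m, hmC, hveq⟩ := combo_mem hconv hpC hqC (hw 0) (hw 1)
      rw [hpz, hqz] at hvne hveq
      set v : Euc n := w 0 • z 0 + w 1 • z 1 with hv
      intro hsum
      have hsplit : ∑ i : Fin (k' + 2), w i • z i =
          w 0 • z 0 + (w 1 • z 1 + ∑ i : Fin k', w i.succ.succ • z i.succ.succ) := by
        rw [Fin.sum_univ_succ, Fin.sum_univ_succ]
        rfl
      set w' : Fin (k' + 1) → ℝ := Fin.cons ‖v‖ (fun i => w i.succ.succ) with hw'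
      set z' : Fin (k' + 1) → Euc n := Fin.cons (m : Euc n) (fun i => z i.succ.succ) with hz'
      have hw'pos : ∀ i, 0 < w' i := by
        intro i
        refine Fin.cases ?_ ?_ i
        · rw [hw', Fin.cons_zero]
          exact norm_pos_iff.mpr hvne
        · intro j
          rw [hw', Fin.cons_succ]
          exact hw _
      have hz'mem : ∀ i, z' i ∈ Subtype.val '' C := by
        intro i
        refine Fin.cases ?_ ?_ i
        · rw [hz', Fin.cons_zero]
          exact ⟨m, hmC, rfl⟩
        · intro j
          rw [hz', Fin.cons_succ]
          exact hz _
      refine ih (Nat.succ_ne_zero k') w' z' hw'pos hz'mem ?_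
      rw [Fin.sum_univ_succ]
      simp only [hw', hz', Fin.cons_zero, Fin.cons_succ]
      rw [← hveq]
      rw [hsplit] at hsum
      rw [← hsum, hv]
      abel

end Stmt4Aux


open Stmt4Aux in
set_option maxHeartbeats 1000000 in
/-- A closed strongly convex subset of the sphere is contained in an open
hemisphere. -/
theorem stmt_4 (n : ℕ) (C : Set (Sph n)) (hcl : IsClosed C)
    (hconv : StronglyConvex C) :
    ∃ v : EuclideanSpace ℝ (Fin (n + 1)), ‖v‖ = 1 ∧
      ∀ x ∈ C, 0 < ⟪v, (x : EuclideanSpace ℝ (Fin (n + 1)))⟫ := by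
  rcases C.eq_empty_or_nonempty with hCe | ⟨x₀, hx₀⟩
  · refine ⟨EuclideanSpace.single 0 1, by simp [EuclideanSpace.norm_single], ?_⟩
    intro x hx
    rw [hCe] at hx
    exact absurd hx (notMem_empty x)
  · set S : Set (Euc n) := Subtype.val '' C with hS
    have hSclosed : IsClosed S :=
      (Metric.isClosed_sphere.isClosedEmbedding_subtypeVal).isClosedMap C hcl
    have hScompact : IsCompact S :=
      (isCompact_sphere (0 : Euc n) 1).of_isClosed_subset hSclosed
        (by rintro x ⟨c, -, rfl⟩; exact c.2)
    have hSx₀ : (x₀ : Euc n) ∈ S := ⟨x₀, hx₀, rfl⟩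
    -- the compact set of convex combinations of n+2 points of S
    set A : Set ((Fin (n + 2) → ℝ) × (Fin (n + 2) → Euc n)) :=
      (stdSimplex ℝ (Fin (n + 2))) ×ˢ (Set.univ.pi fun _ => S) with hA
    have hAcompact : IsCompact A :=
      (isCompact_stdSimplex ℝ _).prod (isCompact_univ_pi fun _ => hScompact)
    set F : (Fin (n + 2) → ℝ) × (Fin (n + 2) → Euc n) → Euc n :=
      fun p => ∑ i, p.1 i • p.2 i with hF
    have hFcont : Continuous F := by
      apply continuous_finset_sum
      intro i _
      exact (((continuous_apply i).comp continuous_fst)).smul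
        ((continuous_apply i).comp continuous_snd)
    set D : Set (Euc n) := F '' A with hD
    have hDcompact : IsCompact D := hAcompact.image hFcont
    have h0D : (0 : Euc n) ∉ D := by
      rintro ⟨⟨wt, zt⟩, ⟨hwt, hzt⟩, heq⟩
      simp only [hF] at heq
      rw [Set.mem_pi] at hzt
      classical
      set t' : Finset (Fin (n + 2)) := Finset.univ.filter (fun i => 0 < wt i) with ht'
      have hsum' : ∑ i ∈ t', wt i • zt i = 0 := by
        rw [← heq]
        apply Finset.sum_subset (Finset.subset_univ t')
        intro i _ hi
        rw [ht', Finset.mem_filter] at hi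
        have : wt i = 0 := le_antisymm (by simpa using fun h => hi ⟨Finset.mem_univ i, h⟩)
          (hwt.1 i)
        rw [this, zero_smul]
      have ht'ne : t'.Nonempty := by
        by_contra hne
        rw [Finset.not_nonempty_iff_eq_empty] at hne
        have : ∑ i, wt i = 0 := by
          apply Finset.sum_eq_zero
          intro i _
          by_contra hzero
          have : 0 < wt i := lt_of_le_of_ne (hwt.1 i) (Ne.symm hzero)
          have : i ∈ t' := by rw [ht', Finset.mem_filter]; exact ⟨Finset.mem_univ i, this⟩
          rw [hne] at this
          exact absurd this (Finset.notMem_empty i)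
        rw [hwt.2] at this
        exact one_ne_zero this
      have hcard : t'.card ≠ 0 := Finset.card_ne_zero_of_mem ht'ne.choose_spec
      set e := t'.equivFin with he
      have hsum'' : ∑ j : Fin t'.card, wt (e.symm j : Fin (n + 2)) •
          zt (e.symm j : Fin (n + 2)) = 0 := by
        rw [← hsum', ← Finset.sum_coe_sort t' (fun i => wt i • zt i),
          ← Equiv.sum_comp e.symm (fun s : {x // x ∈ t'} => wt s.val • zt s.val)]
      exact cone_ne_zero hconv t'.card hcard _ _
        (fun j => (Finset.mem_filter.mp (e.symm j).2).2)
        (fun j => hzt _ (Set.mem_univ _)) hsum''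
    -- convex hull of S is inside D
    have hhull : convexHull ℝ S ⊆ D := by
      intro x hx
      obtain ⟨ι, fι, zz, ww, hrange, haff, hwpos, hwsum, hxeq⟩ :=
        eq_pos_convex_span_of_mem_convexHull hx
      have hcard : Fintype.card ι ≤ n + 2 := by
        rcases isEmpty_or_nonempty ι with h | h
        · simp [Fintype.card_eq_zero]
        · have h1 := haff.finrank_vectorSpan_add_one
          have h2 : Module.finrank ℝ ↥(vectorSpan ℝ (Set.range zz)) ≤ n + 1 := by
            have := Submodule.finrank_le (vectorSpan ℝ (Set.range zz))
            rwa [finrank_euclideanSpace_fin] at this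
          omega
      have hemb : Nonempty (ι ↪ Fin (n + 2)) :=
        Function.Embedding.nonempty_iff_card_le.mpr (by rwa [Fintype.card_fin])
      obtain ⟨emb⟩ := hemb
      classical
      set w' : Fin (n + 2) → ℝ := Function.extend emb ww 0 with hw'
      set z' : Fin (n + 2) → Euc n := Function.extend emb zz (fun _ => (x₀ : Euc n)) with hz'
      have hw'apply : ∀ j, w' (emb j) = ww j := fun j =>
        emb.injective.extend_apply ww (0 : Fin (n + 2) → ℝ) j
      have hz'apply : ∀ j, z' (emb j) = zz j := fun j =>
        emb.injective.extend_apply zz _ j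
      have hw'zero : ∀ i, (¬∃ j, emb j = i) → w' i = 0 := fun i hi =>
        Function.extend_apply' ww (0 : Fin (n + 2) → ℝ) i hi
      have himage : ∀ {β : Type} [AddCommMonoid β] (g : Fin (n+2) → β),
          (∀ i, (¬∃ j, emb j = i) → g i = 0) →
          ∑ i, g i = ∑ j, g (emb j) := by
        intro β _ g hg
        rw [← Finset.sum_image (g := emb) (s := Finset.univ)
          (fun x _ y _ h => emb.injective h)]
        apply (Finset.sum_subset (Finset.subset_univ _) _).symm
        intro i _ hi
        apply hg
        intro ⟨j, hj⟩
        exact hi (Finset.mem_image.mpr ⟨j, Finset.mem_univ j, hj⟩)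
      have hmemA : (w', z') ∈ A := by
        refine ⟨⟨?_, ?_⟩, ?_⟩
        · intro i
          show 0 ≤ w' i
          by_cases hi : ∃ j, emb j = i
          · obtain ⟨j, rfl⟩ := hi
            rw [hw'apply]
            exact (hwpos j).le
          · rw [hw'zero i hi]
        · show (∑ i, w' i) = 1
          rw [show (∑ i, w' i) = ∑ j, w' (emb j) from himage w' hw'zero]
          simp only [hw'apply]
          exact hwsum
        · intro i _
          show z' i ∈ S
          by_cases hi : ∃ j, emb j = i
          · obtain ⟨j, rfl⟩ := hi
            rw [hz'apply]
            exact hrange ⟨j, rfl⟩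
          · rw [hz', Function.extend_apply' zz _ i hi]
            exact hSx₀
      refine ⟨(w', z'), hmemA, ?_⟩
      show (∑ i, w' i • z' i) = x
      have : ∑ i, w' i • z' i = ∑ j, w' (emb j) • z' (emb j) := by
        apply himage
        intro i hi
        rw [hw'zero i hi, zero_smul]
      rw [this]
      simp only [hw'apply, hz'apply]
      exact hxeq
    -- separation
    have h0cl : (0 : Euc n) ∉ closure (convexHull ℝ S) := by
      intro h
      exact h0D (closure_minimal hhull hDcompact.isClosed h)
    obtain ⟨f, u, hfu, hfb⟩ := geometric_hahn_banach_point_closed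
      ((convex_convexHull ℝ S).closure) isClosed_closure h0cl
    have hu : 0 < u := by
      have : f 0 = 0 := map_zero f
      linarith
    set v₀ : Euc n := (InnerProductSpace.toDual ℝ (Euc n)).symm f with hv₀
    have hv₀inner : ∀ y : Euc n, ⟪v₀, y⟫ = f y := fun y =>
      InnerProductSpace.toDual_symm_apply
    have hCpos : ∀ x ∈ C, 0 < ⟪v₀, (x : Euc n)⟫ := by
      intro x hx
      rw [hv₀inner]
      have : (x : Euc n) ∈ closure (convexHull ℝ S) :=
        subset_closure (subset_convexHull ℝ S ⟨x, hx, rfl⟩)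
      linarith [hfb _ this]
    have hv₀ne : v₀ ≠ 0 := by
      intro h
      have := hCpos x₀ hx₀
      rw [h, inner_zero_left] at this
      exact lt_irrefl 0 this
    refine ⟨‖v₀‖⁻¹ • v₀, ?_, ?_⟩
    · rw [norm_smul, Real.norm_eq_abs, abs_of_pos (inv_pos.mpr (norm_pos_iff.mpr hv₀ne)),
        inv_mul_cancel₀ (norm_ne_zero_iff.mpr hv₀ne)]
    · intro x hx
      rw [real_inner_smul_left]
      exact mul_pos (inv_pos.mpr (norm_pos_iff.mpr hv₀ne)) (hCpos x hx)
end
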